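/- If N is an odd unitary super perfect number with N ≠ 9, then N has at least three distinct prime factors. -/

import Mathlib

/-- The sum of the unitary divisors of `n` (divisors `d` of `n` with `gcd(d, n/d) = 1`). -/
def usigma (n : ℕ) : ℕ := ∑ d ∈ n.divisors.filter (fun d => Nat.Coprime d (n / d)), d


lemma usigma_mul {m n : ℕ} (hmn : Nat.Coprime m n) (hm : m ≠ 0) (hn : n ≠ 0) :
    usigma (m * n) = usigma m * usigma n := by
  unfold usigma
  rw [Finset.sum_mul_sum, ← Finset.sum_product']
  refine Finset.sum_nbij' (i := fun d => (Nat.gcd d m, Nat.gcd d n))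
    (j := fun x => x.1 * x.2) ?_ ?_ ?_ ?_ ?_
  · -- forward: unitary divisor of m*n ↦ pair
    intro d hd
    simp only [Finset.mem_filter, Nat.mem_divisors] at hd
    obtain ⟨⟨hdvd, _⟩, hcop⟩ := hd
    have hdm : Nat.gcd d m ∣ m := Nat.gcd_dvd_right d m
    have hdn : Nat.gcd d n ∣ n := Nat.gcd_dvd_right d n
    have hfac : Nat.gcd d m * Nat.gcd d n = d :=
      (Nat.gcd_mul_gcd_eq_iff_dvd_mul_of_coprime hmn).mpr hdvd
    have hquot : m * n / d = (m / Nat.gcd d m) * (n / Nat.gcd d n) := by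
      rw [Nat.div_mul_div_comm hdm hdn, hfac]
    simp only [Finset.mem_product, Finset.mem_filter, Nat.mem_divisors]
    have h1 : Nat.Coprime (Nat.gcd d m) (m / Nat.gcd d m) := by
      have : Nat.Coprime (Nat.gcd d m) (m * n / d) :=
        Nat.Coprime.coprime_dvd_left (Nat.gcd_dvd_left d m) hcop
      rw [hquot] at this
      exact Nat.Coprime.coprime_dvd_right (dvd_mul_right _ _) this
    have h2 : Nat.Coprime (Nat.gcd d n) (n / Nat.gcd d n) := by
      have : Nat.Coprime (Nat.gcd d n) (m * n / d) :=
        Nat.Coprime.coprime_dvd_left (Nat.gcd_dvd_left d n) hcop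
      rw [hquot] at this
      exact Nat.Coprime.coprime_dvd_right (dvd_mul_left _ _) this
    exact ⟨⟨⟨hdm, hm⟩, h1⟩, ⟨⟨hdn, hn⟩, h2⟩⟩
  · -- backward: pair ↦ product
    rintro ⟨d1, d2⟩ hx
    simp only [Finset.mem_product, Finset.mem_filter, Nat.mem_divisors] at hx
    obtain ⟨⟨⟨h1m, _⟩, h1c⟩, ⟨h2n, _⟩, h2c⟩ := hx
    simp only [Finset.mem_filter, Nat.mem_divisors]
    refine ⟨⟨mul_dvd_mul h1m h2n, mul_ne_zero hm hn⟩, ?_⟩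
    have hquot : m * n / (d1 * d2) = (m / d1) * (n / d2) :=
      (Nat.div_mul_div_comm h1m h2n).symm
    rw [hquot]
    have c1 : Nat.Coprime d1 (m / d1 * (n / d2)) := by
      refine Nat.Coprime.mul_right h1c ?_
      exact Nat.Coprime.coprime_dvd_right (Nat.div_dvd_of_dvd h2n)
        (Nat.Coprime.coprime_dvd_left h1m hmn)
    have c2 : Nat.Coprime d2 (m / d1 * (n / d2)) := by
      refine Nat.Coprime.mul_right ?_ h2c
      exact Nat.Coprime.coprime_dvd_right (Nat.div_dvd_of_dvd h1m)
        (Nat.Coprime.coprime_dvd_left h2n hmn.symm)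
    exact Nat.Coprime.mul c1 c2
  · -- left inverse
    intro d hd
    simp only [Finset.mem_filter, Nat.mem_divisors] at hd
    exact (Nat.gcd_mul_gcd_eq_iff_dvd_mul_of_coprime hmn).mpr hd.1.1
  · -- right inverse
    rintro ⟨d1, d2⟩ hx
    simp only [Finset.mem_product, Finset.mem_filter, Nat.mem_divisors] at hx
    obtain ⟨⟨⟨h1m, _⟩, _⟩, ⟨h2n, _⟩, _⟩ := hx
    have c12 : Nat.Coprime d2 m := Nat.Coprime.coprime_dvd_left h2n hmn.symm
    have c21 : Nat.Coprime d1 n := Nat.Coprime.coprime_dvd_left h1m hmn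
    have e1 : Nat.gcd (d1 * d2) m = d1 := by
      rw [mul_comm, Nat.Coprime.gcd_mul_left_cancel d1 c12]
      exact Nat.gcd_eq_left h1m
    have e2 : Nat.gcd (d1 * d2) n = d2 := by
      rw [Nat.Coprime.gcd_mul_left_cancel d2 c21]
      exact Nat.gcd_eq_left h2n
    simp [e1, e2]
  · intro d hd
    simp only [Finset.mem_filter, Nat.mem_divisors] at hd
    exact ((Nat.gcd_mul_gcd_eq_iff_dvd_mul_of_coprime hmn).mpr hd.1.1).symm

lemma usigma_prime_pow {p k : ℕ} (hp : p.Prime) (hk : 1 ≤ k) :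
    usigma (p ^ k) = p ^ k + 1 := by
  have hfilter : (p ^ k).divisors.filter (fun d => Nat.Coprime d (p ^ k / d)) = {p ^ k, 1} := by
    ext d
    simp only [Finset.mem_filter, Nat.mem_divisors, Finset.mem_insert, Finset.mem_singleton]
    constructor
    · rintro ⟨⟨hdvd, _⟩, hcop⟩
      obtain ⟨i, hik, rfl⟩ := (Nat.dvd_prime_pow hp).mp hdvd
      have hq : p ^ k / p ^ i = p ^ (k - i) := by
        rw [Nat.pow_div hik hp.pos]
      rw [hq] at hcop
      rcases Nat.eq_zero_or_pos i with hi | hi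
      · right; simp [hi]
      rcases eq_or_lt_of_le hik with hik' | hik'
      · left; rw [hik']
      · exfalso
        have h1 : p ∣ p ^ i := dvd_pow_self p hi.ne'
        have h2 : p ∣ p ^ (k - i) := dvd_pow_self p (by omega)
        have := Nat.Coprime.eq_one_of_dvd (Nat.Coprime.coprime_dvd_left h1
          (Nat.Coprime.coprime_dvd_right h2 hcop)) (dvd_refl p)
        exact hp.one_lt.ne' this
    · rintro (rfl | rfl)
      · refine ⟨⟨dvd_refl _, pow_ne_zero _ hp.pos.ne'⟩, ?_⟩
        simp [Nat.div_self (pow_pos hp.pos k)]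
      · exact ⟨⟨one_dvd _, pow_ne_zero _ hp.pos.ne'⟩, Nat.coprime_one_left _⟩
  rw [usigma, hfilter]
  have hne : p ^ k ≠ 1 := Nat.one_lt_pow (by omega) hp.one_lt |>.ne'
  rw [Finset.sum_pair hne]

lemma usigma_eq_prod : ∀ n : ℕ, n ≠ 0 →
    usigma n = ∏ p ∈ n.primeFactors, (p ^ n.factorization p + 1) := by
  intro n
  induction n using Nat.recOnPrimePow with
  | zero => intro h; exact absurd rfl h
  | one => intro _; rw [show usigma 1 = 1 by decide]; simp
  | prime_pow_mul a p k hp hpa hk ih =>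
    intro hne
    have ha : a ≠ 0 := by rintro rfl; simp at hne
    have hpk : p ^ k ≠ 0 := pow_ne_zero _ hp.pos.ne'
    have hcop : Nat.Coprime (p ^ k) a := (Nat.Prime.coprime_iff_not_dvd hp).mpr hpa |>.pow_left _
    have hPF : (p ^ k * a).primeFactors = insert p a.primeFactors := by
      rw [Nat.primeFactors_mul hpk ha, Nat.primeFactors_prime_pow hk.ne' hp]
      ext x; simp [or_comm]
    have hpnotin : p ∉ a.primeFactors := fun h => hpa (Nat.dvd_of_mem_primeFactors h)
    have hfact : ∀ q ∈ a.primeFactors, (p ^ k * a).factorization q = a.factorization q := by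
      intro q hq
      rw [Nat.factorization_mul hpk ha]
      have hqp : q ≠ p := fun h => hpnotin (h ▸ hq)
      simp [hp.factorization_pow, Finsupp.single_apply, hqp.symm]
    have hfactp : (p ^ k * a).factorization p = k := by
      rw [Nat.factorization_mul hpk ha]
      have : a.factorization p = 0 := Nat.factorization_eq_zero_of_not_dvd hpa
      simp [hp.factorization_pow, this]
    rw [usigma_mul hcop hpk ha, usigma_prime_pow hp hk, ih ha, hPF,
      Finset.prod_insert hpnotin, hfactp]
    congr 1
    exact Finset.prod_congr rfl fun q hq => by rw [hfact q hq]

lemma usigma_ge (n : ℕ) (hn : n ≠ 0) : n ≤ usigma n := by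
  unfold usigma
  refine Finset.single_le_sum (f := fun d => d) (fun i _ => Nat.zero_le i) ?_
  simp only [Finset.mem_filter, Nat.mem_divisors]
  exact ⟨⟨dvd_refl n, hn⟩, by simp [Nat.div_self (Nat.pos_of_ne_zero hn)]⟩

lemma odd_prime_of_dvd_odd {p N : ℕ} (hp : p.Prime) (hdvd : p ∣ N) (hodd : Odd N) :
    p ≠ 2 := by
  rintro rfl
  rw [Nat.odd_iff, Nat.two_dvd_ne_zero.symm] at hodd
  exact (hodd (by simpa using hdvd)).elim

lemma structure_lemma (N : ℕ) (h2 : 2 ≤ N) (hodd : Odd N)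
    (husp : usigma (usigma N) = 2 * N) :
    ∃ c R, 1 ≤ c ∧ 1 ≤ R ∧ Odd R ∧ usigma N = 2 ^ c * R ∧
      (2 ^ c + 1) * (R + 1) = 2 * N := by
  have hN0 : N ≠ 0 := by omega
  set M := usigma N with hM
  have hMN : N ≤ M := usigma_ge N hN0
  have hM0 : M ≠ 0 := by omega
  -- M is even
  have hMeven : 2 ∣ M := by
    obtain ⟨p, hp, hpd⟩ := Nat.exists_prime_and_dvd (n := N) (by omega)
    have hpPF : p ∈ N.primeFactors := Nat.mem_primeFactors.mpr ⟨hp, hpd, hN0⟩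
    have hp2 : p ≠ 2 := odd_prime_of_dvd_odd hp hpd hodd
    have h1 : 2 ∣ p ^ N.factorization p + 1 := by
      have := (hp.odd_of_ne_two hp2).pow (n := N.factorization p)
      rw [Nat.odd_iff] at this; omega
    calc (2:ℕ) ∣ p ^ N.factorization p + 1 := h1
      _ ∣ M := hM ▸ (usigma_eq_prod N hN0) ▸ Finset.dvd_prod_of_mem _ hpPF
  -- the set of odd primes of M
  set T := M.primeFactors.erase 2 with hT
  have hTdvd : (2:ℕ) ^ T.card ∣ 2 * N := by
    have h1 : (2:ℕ) ^ T.card = ∏ _p ∈ T, 2 := by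
      rw [Finset.prod_const]
    have h2 : (∏ _p ∈ T, (2:ℕ)) ∣ ∏ p ∈ T, (p ^ M.factorization p + 1) := by
      refine Finset.prod_dvd_prod_of_dvd _ _ fun p hp => ?_
      have hpp : p.Prime := Nat.prime_of_mem_primeFactors (Finset.mem_of_mem_erase hp)
      have hp2 : p ≠ 2 := Finset.ne_of_mem_erase hp
      have := (hpp.odd_of_ne_two hp2).pow (n := M.factorization p)
      rw [Nat.odd_iff] at this; omega
    have h3 : (∏ p ∈ T, (p ^ M.factorization p + 1)) ∣
        ∏ p ∈ M.primeFactors, (p ^ M.factorization p + 1) :=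
      Finset.prod_dvd_prod_of_subset _ _ _ (Finset.erase_subset _ _)
    rw [h1]
    exact (h2.trans h3).trans (by rw [← usigma_eq_prod M hM0, husp])
  have hTcard : T.card ≤ 1 := by
    by_contra hc
    push_neg at hc
    have h4 : (2:ℕ)^2 ∣ 2^T.card := pow_dvd_pow 2 hc
    have : (4:ℕ) ∣ 2 * N := by norm_num at h4 ⊢; exact h4.trans hTdvd
    rw [Nat.odd_iff] at hodd
    omega
  have hTne : T.card = 1 := by
    rcases Nat.lt_or_ge T.card 1 with h | h
    · exfalso
      -- T empty: M's prime factors ⊆ {2}, so usigma M is odd, contradiction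
      have hTe : T = ∅ := Finset.card_eq_zero.mp (by omega)
      have hsub : M.primeFactors ⊆ {2} := by
        intro p hp
        by_contra hne
        have : p ∈ T := Finset.mem_erase.mpr ⟨by simpa using hne, hp⟩
        simp [hTe] at this
      have hdvd2 : (2:ℕ) ∣ ∏ p ∈ M.primeFactors, (p ^ M.factorization p + 1) := by
        rw [← usigma_eq_prod M hM0, husp]; exact ⟨N, rfl⟩
      obtain ⟨p, hpPF, hpdvd⟩ := ((Nat.prime_iff.mp Nat.prime_two).dvd_finset_prod_iff _).mp hdvd2
      have hp2 : p = 2 := by have := hsub hpPF; simpa using this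
      subst hp2
      have hc1 : 1 ≤ M.factorization 2 :=
        (Nat.Prime.factorization_pos_of_dvd Nat.prime_two hM0
          (Nat.dvd_of_mem_primeFactors hpPF))
      have : (2:ℕ) ∣ 2 ^ M.factorization 2 := dvd_pow_self 2 (by omega)
      omega
    · omega
  obtain ⟨r, hr⟩ := Finset.card_eq_one.mp hTne
  have hrPF : r ∈ M.primeFactors := Finset.mem_of_mem_erase (hr ▸ Finset.mem_singleton_self r)
  have hr2 : r ≠ 2 := Finset.ne_of_mem_erase (hr ▸ Finset.mem_singleton_self r)
  have hrp : r.Prime := Nat.prime_of_mem_primeFactors hrPF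
  have h2PF : (2:ℕ) ∈ M.primeFactors := Nat.mem_primeFactors.mpr ⟨Nat.prime_two, hMeven, hM0⟩
  have hPFM : M.primeFactors = {2, r} := by
    rw [← Finset.insert_erase h2PF, ← hT, hr]
  set c := M.factorization 2 with hc
  set f := M.factorization r with hf
  have hc1 : 1 ≤ c := Nat.Prime.factorization_pos_of_dvd Nat.prime_two hM0 hMeven
  have hf1 : 1 ≤ f := Nat.Prime.factorization_pos_of_dvd hrp hM0
    (Nat.dvd_of_mem_primeFactors hrPF)
  have h2r : (2:ℕ) ∉ ({r} : Finset ℕ) := by simp [Ne.symm hr2]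
  have hMeq : M = 2 ^ c * r ^ f := by
    conv_lhs => rw [← Nat.factorization_prod_pow_eq_self hM0]
    rw [Nat.prod_factorization_eq_prod_primeFactors, hPFM,
      Finset.prod_insert h2r, Finset.prod_singleton]
  have husigM : usigma M = (2 ^ c + 1) * (r ^ f + 1) := by
    rw [usigma_eq_prod M hM0, hPFM, Finset.prod_insert h2r, Finset.prod_singleton]
  exact ⟨c, r ^ f, hc1, Nat.one_le_iff_ne_zero.mpr (pow_ne_zero _ hrp.pos.ne'),
    (hrp.odd_of_ne_two hr2).pow, hMeq, by rw [← husigM, husp]⟩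

lemma one_prime_case (p a c R : ℕ) (hp : p.Prime) (hp2 : p ≠ 2) (ha : 1 ≤ a)
    (hc : 1 ≤ c) (h1 : p ^ a + 1 = 2 ^ c * R)
    (h2 : (2 ^ c + 1) * (R + 1) = 2 * p ^ a) : p ^ a = 9 := by
  have hp3 : 3 ≤ p := by
    rcases hp.two_le.lt_or_eq with h | h
    · omega
    · omega
  -- D = 2^c+1 divides p^a
  have hD : 2 ^ c + 1 ∣ p ^ a := by
    have hdvd : 2 ^ c + 1 ∣ 2 * p ^ a := ⟨R + 1, h2.symm⟩
    have hmod : (2 ^ c + 1) % 2 = 1 := by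
      have h2c : 2 ^ c % 2 = 0 := by
        have : (2:ℕ) ∣ 2 ^ c := dvd_pow_self 2 (by omega)
        omega
      omega
    have hodd : Nat.Coprime (2 ^ c + 1) 2 :=
      Nat.coprime_two_right.mpr (Nat.odd_iff.mpr hmod)
    exact Nat.Coprime.dvd_of_dvd_mul_left hodd hdvd
  obtain ⟨s, hsa, hDs⟩ := (Nat.dvd_prime_pow hp).mp hD
  have hc2 : 3 ≤ 2 ^ c + 1 := by
    have : 2 ≤ 2 ^ c := Nat.one_lt_two_pow_iff.mpr (by omega)
    omega
  have hs1 : 1 ≤ s := by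
    rcases Nat.eq_zero_or_pos s with rfl | h
    · rw [pow_zero] at hDs; omega
    · exact h
  -- key identity over ℤ
  have key : (p : ℤ) ^ a * (2 ^ c - 1) = (2 ^ c + 1) ^ 2 := by
    have h1' : (p : ℤ) ^ a + 1 = 2 ^ c * R := by exact_mod_cast h1
    have h2' : ((2 : ℤ) ^ c + 1) * (R + 1) = 2 * p ^ a := by exact_mod_cast h2
    linear_combination (-((2:ℤ)^c + 1)) * h1' - 2 ^ c * h2'
  have hDs' : ((2:ℤ) ^ c + 1) = (p : ℤ) ^ s := by exact_mod_cast congrArg (Nat.cast (R := ℤ)) hDs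
  have hps3 : 3 ≤ p ^ s := by calc 3 ≤ p := hp3
                                   _ = p ^ 1 := (pow_one p).symm
                                   _ ≤ p ^ s := Nat.pow_le_pow_right (by omega) hs1
  -- p^a * (p^s - 2) = p^(2s) over ℕ
  have keyN : p ^ a * (p ^ s - 2) = p ^ (2 * s) := by
    zify [show 2 ≤ p ^ s by omega]
    calc (p:ℤ)^a * ((p:ℤ)^s - 2) = (p:ℤ)^a * ((2^c + 1) - 2) := by rw [hDs']
      _ = (p:ℤ)^a * (2^c - 1) := by ring
      _ = (2^c+1)^2 := key
      _ = ((p:ℤ)^s)^2 := by rw [hDs']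
      _ = (p:ℤ)^(2*s) := by rw [pow_mul']
  have hwdvd : p ^ s - 2 ∣ p ^ (2 * s) := Dvd.intro_left _ keyN
  obtain ⟨j, hj2s, hjw⟩ := (Nat.dvd_prime_pow hp).mp hwdvd
  rcases Nat.eq_zero_or_pos j with rfl | hj1
  · -- p^s - 2 = 1, so p^s = 3, p = 3, s = 1
    simp only [pow_zero] at hjw
    have hps : p ^ s = 3 := by omega
    have hp3' : p = 3 := by
      have : p ∣ 3 := hps ▸ dvd_pow_self p (by omega)
      rcases (Nat.Prime.eq_one_or_self_of_dvd Nat.prime_three p this) with h | h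
      · exact absurd h hp.ne_one
      · exact h
    have hs' : s = 1 := by
      subst hp3'
      rcases Nat.lt_or_ge s 2 with h | h
      · omega
      · exfalso; have : 9 ≤ 3 ^ s := by calc (9:ℕ) = 3^2 := by norm_num
                                             _ ≤ 3 ^ s := Nat.pow_le_pow_right (by norm_num) h
        omega
    rw [hjw] at keyN
    subst hp3' hs'
    simpa using keyN
  · -- p divides p^s - 2 and p^s, so p ∣ 2, contradiction
    exfalso
    have h1' : p ∣ p ^ s - 2 := hjw ▸ dvd_pow_self p (by omega)
    have h2' : p ∣ p ^ s := dvd_pow_self p (by omega)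
    have hpd2 : p ∣ 2 := by
      have := Nat.dvd_sub h2' h1'
      rwa [Nat.sub_sub_self (by omega)] at this
    have := Nat.le_of_dvd (by norm_num) hpd2
    omega

lemma prime_eq_of_pow {p x j : ℕ} (hp : p.Prime) (hx : x.Prime) (hj : 1 ≤ j)
    (h : x ^ j = p) : x = p := by
  have : x ∣ p := h ▸ dvd_pow_self x (by omega)
  exact ((Nat.prime_dvd_prime_iff_eq hx hp).mp this)


lemma ineq_caseA (X Y B : ℤ) (hX : 3 ≤ X) (hY : 5 ≤ Y) (hB : 5 ≤ B)
    (h : X * Y * (1 * B - 2) = 1 * X + B * Y + 1 * B) : False := by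
  have q1 : 0 ≤ X * Y * (B - 5) :=
    mul_nonneg (mul_nonneg (by linarith) (by linarith)) (by linarith)
  have q2 : 0 ≤ X * (Y * B - 25) := mul_nonneg (by linarith) (by nlinarith)
  have q3 : 0 ≤ B * (X * Y - 15) := mul_nonneg (by linarith) (by nlinarith)
  nlinarith [q1, q2, q3]

lemma ineq_caseB (X Y A : ℤ) (hX : 3 ≤ X) (hY : 5 ≤ Y) (hA : 5 ≤ A)
    (h : X * Y * (A * 1 - 2) = A * X + 1 * Y + A * 1) : False := by
  have q1 : 0 ≤ X * Y * (A - 5) :=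
    mul_nonneg (mul_nonneg (by linarith) (by linarith)) (by linarith)
  have q2 : 0 ≤ X * A * (Y - 5) :=
    mul_nonneg (mul_nonneg (by linarith) (by linarith)) (by linarith)
  have q3 : 0 ≤ Y * (X * A - 15) := mul_nonneg (by linarith) (by nlinarith)
  have q4 : 0 ≤ A * (X * Y - 15) := mul_nonneg (by linarith) (by nlinarith)
  nlinarith [q1, q2, q3, q4]

lemma ineq_caseC (X Y A B : ℤ) (hX : 3 ≤ X) (hY : 5 ≤ Y) (hA : 3 ≤ A) (hB : 5 ≤ B)
    (h : X * Y * (A * B - 2) = A * X + B * Y + A * B) : False := by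
  have q1 : 0 ≤ (X * A) * (Y * B - 25) :=
    mul_nonneg (by nlinarith) (by nlinarith)
  have q2 : 0 ≤ (Y * B) * (X * A - 9) :=
    mul_nonneg (by nlinarith) (by nlinarith)
  have q3 : 0 ≤ (A * B) * (X * Y - 15) :=
    mul_nonneg (by nlinarith) (by nlinarith)
  have q4 : 0 ≤ (X * Y) * (A * B - 15) :=
    mul_nonneg (by nlinarith) (by nlinarith)
  nlinarith [q1, q2, q3, q4]

lemma ineq_caseD (X A B : ℤ) (hX : 3 ≤ X) (hA : 3 ≤ A) (hB : 5 ≤ B)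
    (h : X * 1 * (A * B - 2) = A * X + B * 1 + A * B) : False := by
  have q1 : 0 ≤ X * (A * B - 15) := mul_nonneg (by linarith) (by nlinarith)
  have q2 : 0 ≤ (X * A) * (B - 5) := mul_nonneg (by nlinarith) (by linarith)
  have q3 : 0 ≤ B * (X * A - 9) := mul_nonneg (by linarith) (by nlinarith)
  have q4 : 0 ≤ (A * B) * (X - 3) := mul_nonneg (by nlinarith) (by linarith)
  nlinarith [q1, q2, q3, q4]

lemma ineq_caseE (Y A B : ℤ) (hY : 5 ≤ Y) (hA : 3 ≤ A) (hB : 5 ≤ B)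
    (h : 1 * Y * (A * B - 2) = A * 1 + B * Y + A * B) : False := by
  have q1 : 0 ≤ Y * (A * B - 15) := mul_nonneg (by linarith) (by nlinarith)
  have q2 : 0 ≤ A * (Y * B - 25) := mul_nonneg (by linarith) (by nlinarith)
  have q3 : 0 ≤ (Y * B) * (A - 3) := mul_nonneg (by nlinarith) (by linarith)
  have q4 : 0 ≤ (A * B) * (Y - 5) := mul_nonneg (by nlinarith) (by linarith)
  nlinarith [q1, q2, q3, q4]

set_option maxHeartbeats 1000000 in
lemma two_prime_case (p q a b c R : ℕ) (hp : p.Prime) (hq : q.Prime)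
    (hpq : p < q) (hp2 : p ≠ 2) (hq2 : q ≠ 2) (ha : 1 ≤ a) (hb : 1 ≤ b)
    (hc : 2 ≤ c)
    (h1 : (p ^ a + 1) * (q ^ b + 1) = 2 ^ c * R)
    (h2 : (2 ^ c + 1) * (R + 1) = 2 * (p ^ a * q ^ b)) : False := by
  have hp3 : 3 ≤ p := by rcases hp.two_le.lt_or_eq with h | h <;> omega
  have hq5 : 5 ≤ q := by
    have h4 : q ≠ 4 := fun h => by rw [h] at hq; norm_num at hq
    omega
  have hD5 : 5 ≤ 2 ^ c + 1 := by
    have : 4 ≤ 2 ^ c := by calc (4:ℕ) = 2 ^ 2 := by norm_num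
                                _ ≤ 2 ^ c := Nat.pow_le_pow_right (by norm_num) hc
    omega
  -- D := 2^c+1 divides p^a * q^b
  have hD : 2 ^ c + 1 ∣ p ^ a * q ^ b := by
    have hdvd : 2 ^ c + 1 ∣ 2 * (p ^ a * q ^ b) := ⟨R + 1, h2.symm⟩
    have hmod : (2 ^ c + 1) % 2 = 1 := by
      have : (2:ℕ) ∣ 2 ^ c := dvd_pow_self 2 (by omega)
      omega
    exact Nat.Coprime.dvd_of_dvd_mul_left
      (Nat.coprime_two_right.mpr (Nat.odd_iff.mpr hmod)) hdvd
  obtain ⟨d₁, d₂, hd₁, hd₂, hDd⟩ := exists_dvd_and_dvd_of_dvd_mul hD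
  obtain ⟨s, hsa, rfl⟩ := (Nat.dvd_prime_pow hp).mp hd₁
  obtain ⟨t, htb, rfl⟩ := (Nat.dvd_prime_pow hq).mp hd₂
  -- notation: u, v
  set u := a - s with hu
  set v := b - t with hv
  have hau : a = s + u := by omega
  have hbv : b = t + v := by omega
  -- cast everything to ℤ
  have h1' : ((p:ℤ) ^ a + 1) * ((q:ℤ) ^ b + 1) = 2 ^ c * (R:ℤ) := by exact_mod_cast h1
  have h2' : ((2:ℤ) ^ c + 1) * ((R:ℤ) + 1) = 2 * ((p:ℤ) ^ a * (q:ℤ) ^ b) := by exact_mod_cast h2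
  have hDd' : ((2:ℤ) ^ c + 1) = (p:ℤ) ^ s * (q:ℤ) ^ t := by exact_mod_cast hDd
  -- key identity
  have key : (p:ℤ) ^ a * (q:ℤ) ^ b * (2 ^ c - 1)
      = (2 ^ c + 1) * ((p:ℤ) ^ a + (q:ℤ) ^ b + 2 ^ c + 1) := by
    linear_combination (-((2:ℤ)^c + 1)) * h1' - 2 ^ c * h2'
  -- cancel D
  have hD0 : ((p:ℤ) ^ s * (q:ℤ) ^ t) ≠ 0 := by positivity
  have key2 : (p:ℤ) ^ u * (q:ℤ) ^ v * ((p:ℤ) ^ s * (q:ℤ) ^ t - 2)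
      = (p:ℤ) ^ a + (q:ℤ) ^ b + (p:ℤ) ^ s * (q:ℤ) ^ t := by
    apply mul_left_cancel₀ hD0
    have e1 : (p:ℤ) ^ a = (p:ℤ) ^ s * (p:ℤ) ^ u := by rw [hau, pow_add]
    have e2 : (q:ℤ) ^ b = (q:ℤ) ^ t * (q:ℤ) ^ v := by rw [hbv, pow_add]
    calc (p:ℤ)^s * (q:ℤ)^t * ((p:ℤ)^u * (q:ℤ)^v * ((p:ℤ)^s * (q:ℤ)^t - 2))
        = (p:ℤ)^a * (q:ℤ)^b * (((p:ℤ)^s * (q:ℤ)^t) - 2) := by rw [e1, e2]; ring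
      _ = (p:ℤ)^a * (q:ℤ)^b * (2^c - 1) := by linear_combination (-((p:ℤ)^a * (q:ℤ)^b)) * hDd'
      _ = (2^c + 1) * ((p:ℤ)^a + (q:ℤ)^b + 2^c + 1) := key
      _ = (p:ℤ)^s * (q:ℤ)^t * ((p:ℤ)^a + (q:ℤ)^b + (p:ℤ)^s * (q:ℤ)^t) := by
          linear_combination ((p:ℤ)^a + (q:ℤ)^b + (2^c+1) + (p:ℤ)^s*(q:ℤ)^t) * hDd'
  -- bounds
  have hps1 : (1:ℤ) ≤ (p:ℤ) ^ s := one_le_pow₀ (by exact_mod_cast (hp).one_lt.le)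
  have hqt1 : (1:ℤ) ≤ (q:ℤ) ^ t := one_le_pow₀ (by exact_mod_cast (hq).one_lt.le)
  have hpu1 : (1:ℤ) ≤ (p:ℤ) ^ u := one_le_pow₀ (by exact_mod_cast (hp).one_lt.le)
  have hqv1 : (1:ℤ) ≤ (q:ℤ) ^ v := one_le_pow₀ (by exact_mod_cast (hq).one_lt.le)
  have hpa : (p:ℤ) ^ a = (p:ℤ) ^ s * (p:ℤ) ^ u := by rw [hau, pow_add]
  have hqb : (q:ℤ) ^ b = (q:ℤ) ^ t * (q:ℤ) ^ v := by rw [hbv, pow_add]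
  have hD5' : (5:ℤ) ≤ (p:ℤ) ^ s * (q:ℤ) ^ t := by
    rw [← hDd']; exact_mod_cast hD5
  have hps3 : 1 ≤ s → (3:ℤ) ≤ (p:ℤ) ^ s := fun hs => by
    calc (3:ℤ) ≤ (p:ℤ) := by exact_mod_cast hp3
      _ = (p:ℤ)^1 := (pow_one _).symm
      _ ≤ (p:ℤ)^s := pow_le_pow_right₀ (by exact_mod_cast hp.one_lt.le) hs
  have hqt5 : 1 ≤ t → (5:ℤ) ≤ (q:ℤ) ^ t := fun ht => by
    calc (5:ℤ) ≤ (q:ℤ) := by exact_mod_cast hq5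
      _ = (q:ℤ)^1 := (pow_one _).symm
      _ ≤ (q:ℤ)^t := pow_le_pow_right₀ (by exact_mod_cast hq.one_lt.le) ht
  have hpu3 : 1 ≤ u → (3:ℤ) ≤ (p:ℤ) ^ u := fun h' => by
    calc (3:ℤ) ≤ (p:ℤ) := by exact_mod_cast hp3
      _ = (p:ℤ)^1 := (pow_one _).symm
      _ ≤ (p:ℤ)^u := pow_le_pow_right₀ (by exact_mod_cast hp.one_lt.le) h'
  have hqv5 : 1 ≤ v → (5:ℤ) ≤ (q:ℤ) ^ v := fun h' => by
    calc (5:ℤ) ≤ (q:ℤ) := by exact_mod_cast hq5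
      _ = (q:ℤ)^1 := (pow_one _).symm
      _ ≤ (q:ℤ)^v := pow_le_pow_right₀ (by exact_mod_cast hq.one_lt.le) h'

  -- abbreviations
  set A : ℤ := (p:ℤ) ^ s with hA
  set B : ℤ := (q:ℤ) ^ t with hB
  set X : ℤ := (p:ℤ) ^ u with hX
  set Y : ℤ := (q:ℤ) ^ v with hY
  have key3 : X * Y * (A * B - 2) = A * X + B * Y + A * B := by
    rw [hpa, hqb] at key2; linear_combination key2
  -- case analysis
  rcases Nat.eq_zero_or_pos u with hu0 | hu1
  · rcases Nat.eq_zero_or_pos v with hv0 | hv1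
    · -- u = 0, v = 0 : X = Y = 1
      have hX1 : X = 1 := by rw [hX, hu0, pow_zero]
      have hY1 : Y = 1 := by rw [hY, hv0, pow_zero]
      rw [hX1, hY1] at key3
      linarith only [key3, hps1, hqt1]
    · -- u = 0, v ≥ 1
      have hX1 : X = 1 := by rw [hX, hu0, pow_zero]
      have hs1 : 1 ≤ s := by omega
      have hA3 : (3:ℤ) ≤ A := hps3 hs1
      have hY5 : (5:ℤ) ≤ Y := hqv5 hv1
      rcases Nat.eq_zero_or_pos t with ht0 | ht1
      · -- enumeration case H
        have hB1 : B = 1 := by rw [hB, ht0, pow_zero]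
        rw [hX1, hB1] at key3
        have hA5 : (5:ℤ) ≤ A := by
          have := hD5'; rw [hB1] at this; linarith only [this]
        have h6 : (Y - 2) * (A - 3) = 6 := by linear_combination key3
        have hYle : Y ≤ 5 := by
          have h7 : (0:ℤ) ≤ (Y - 2) * (A - 5) := mul_nonneg (by linarith) (by linarith)
          linarith only [h6, h7]
        have hY5' : Y = 5 := le_antisymm hYle hY5
        have hAeq : A = 5 := by rw [hY5'] at h6; linarith only [h6]
        -- q ∣ Y = 5 and p ∣ A = 5
        have hqY : q ∣ q ^ v := dvd_pow_self q (by omega)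
        have hY5N : q ^ v = 5 := by
          have := hY5'; rw [hY] at this; exact_mod_cast this
        have hq5' : q = 5 := by
          have : q ∣ 5 := hY5N ▸ hqY
          have := Nat.le_of_dvd (by norm_num) this
          interval_cases q <;> omega
        have hpA : p ∣ p ^ s := dvd_pow_self p (by omega)
        have hA5N : p ^ s = 5 := by
          have := hAeq; rw [hA] at this; exact_mod_cast this
        have hp5 : p = 5 := by
          have : p ∣ 5 := hA5N ▸ hpA
          have := Nat.le_of_dvd (by norm_num) this
          interval_cases p <;> omega
        omega
      · -- nlinarith case E
        have hB5 : (5:ℤ) ≤ B := hqt5 ht1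
        rw [hX1] at key3
        exact ineq_caseE Y A B hY5 hA3 hB5 key3
  · rcases Nat.eq_zero_or_pos v with hv0 | hv1
    · -- u ≥ 1, v = 0
      have hY1 : Y = 1 := by rw [hY, hv0, pow_zero]
      have ht1 : 1 ≤ t := by omega
      have hX3 : (3:ℤ) ≤ X := hpu3 hu1
      have hB5 : (5:ℤ) ≤ B := hqt5 ht1
      rcases Nat.eq_zero_or_pos s with hs0 | hs1
      · -- enumeration case G
        have hA1 : A = 1 := by rw [hA, hs0, pow_zero]
        rw [hY1, hA1] at key3
        have h6 : (X - 2) * (B - 3) = 6 := by linear_combination key3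
        have hXle : X ≤ 5 := by
          have h7 : (0:ℤ) ≤ (X - 2) * (B - 5) := mul_nonneg (by linarith) (by linarith)
          linarith only [h6, h7]
        -- X odd
        have hXoddN : p ^ u % 2 = 1 := by
          rcases Nat.even_or_odd (p ^ u) with he | ho
          · exfalso
            have : (2:ℕ) ∣ p ^ u := even_iff_two_dvd.mp he
            have h2p : (2:ℕ) ∣ p := (Nat.Prime.dvd_of_dvd_pow Nat.prime_two this)
            have := Nat.le_of_dvd (by omega) h2p
            rcases (Nat.prime_dvd_prime_iff_eq Nat.prime_two hp).mp h2p with h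
            exact hp2 h.symm
          · exact Nat.odd_iff.mp ho
        have hXN3 : 3 ≤ p ^ u := by
          have := hX3; rw [hX] at this; exact_mod_cast this
        have hXN5 : p ^ u ≤ 5 := by
          have := hXle; rw [hX] at this; exact_mod_cast this
        have hXcase : p ^ u = 3 ∨ p ^ u = 5 := by omega
        rcases hXcase with hX3' | hX5'
        · -- X = 3, B = 9, q ∣ 9 → q = 3 contradiction
          have hXZ : X = 3 := by rw [hX]; exact_mod_cast hX3'
          have hBZ : B = 9 := by rw [hXZ] at h6; linarith only [h6]
          have hBN : q ^ t = 9 := by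
            have := hBZ; rw [hB] at this; exact_mod_cast this
          have hq9 : q ∣ 9 := hBN ▸ dvd_pow_self q (by omega)
          have hq3 : q ∣ 3 := Nat.Prime.dvd_of_dvd_pow (n := 2) hq (by norm_num at hq9 ⊢; exact hq9)
          have := Nat.le_of_dvd (by norm_num) hq3
          omega
        · -- X = 5 → p = 5, B = 5 → q = 5, contra p < q
          have hp5 : p = 5 := by
            have hpd : p ∣ 5 := hX5' ▸ dvd_pow_self p (by omega)
            have := Nat.le_of_dvd (by norm_num) hpd
            interval_cases p <;> omega
          have hXZ : X = 5 := by rw [hX]; exact_mod_cast hX5'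
          have hBZ : B = 5 := by rw [hXZ] at h6; linarith only [h6]
          have hBN : q ^ t = 5 := by
            have := hBZ; rw [hB] at this; exact_mod_cast this
          have hqd : q ∣ 5 := hBN ▸ dvd_pow_self q (by omega)
          have := Nat.le_of_dvd (by norm_num) hqd
          omega
      · -- nlinarith case D
        have hA3 : (3:ℤ) ≤ A := hps3 hs1
        rw [hY1] at key3
        exact ineq_caseD X A B hX3 hA3 hB5 key3
    · -- u ≥ 1, v ≥ 1
      have hX3 : (3:ℤ) ≤ X := hpu3 hu1
      have hY5 : (5:ℤ) ≤ Y := hqv5 hv1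
      rcases Nat.eq_zero_or_pos s with hs0 | hs1
      · have hA1 : A = 1 := by rw [hA, hs0, pow_zero]
        rcases Nat.eq_zero_or_pos t with ht0 | ht1
        · -- A = B = 1 contradicts D ≥ 5
          have hB1 : B = 1 := by rw [hB, ht0, pow_zero]
          have := hD5'; rw [hA1, hB1] at this; linarith only [this]
        · -- nlinarith case A
          have hB5 : (5:ℤ) ≤ B := hqt5 ht1
          rw [hA1] at key3
          exact ineq_caseA X Y B hX3 hY5 hB5 key3
      · have hA3 : (3:ℤ) ≤ A := hps3 hs1
        rcases Nat.eq_zero_or_pos t with ht0 | ht1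
        · -- nlinarith case B
          have hB1 : B = 1 := by rw [hB, ht0, pow_zero]
          have hA5 : (5:ℤ) ≤ A := by
            have := hD5'; rw [hB1] at this; linarith only [this]
          rw [hB1] at key3
          exact ineq_caseB X Y A hX3 hY5 hA5 key3
        · -- nlinarith case C
          have hB5 : (5:ℤ) ≤ B := hqt5 ht1
          exact ineq_caseC X Y A B hX3 hY5 hA3 hB5 key3

/-- If `N` is an odd unitary super perfect number with `N ≠ 9`, then `N` has at least
three distinct prime factors. -/
theorem usp_omega_ge_three (N : ℕ) (hpos : 0 < N) (hodd : Odd N)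
    (husp : usigma (usigma N) = 2 * N) (h9 : N ≠ 9) :
    3 ≤ N.primeFactors.card := by
  by_contra hcon
  push_neg at hcon
  have hN0 : N ≠ 0 := hpos.ne'
  -- exclude N = 1
  have hN2 : 2 ≤ N := by
    rcases Nat.lt_or_ge N 2 with h | h
    · exfalso
      have hN1 : N = 1 := by omega
      rw [hN1] at husp
      rw [show usigma 1 = 1 from by decide] at husp
      rw [show usigma 1 = 1 from by decide] at husp
      omega
    · exact h
  obtain ⟨c, R, hc1, hR1, hRodd, hMeq, hRel⟩ := structure_lemma N hN2 hodd husp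
  have hcard : N.primeFactors.card ≤ 2 := by omega
  rcases Nat.lt_or_ge N.primeFactors.card 1 with h0 | h1'
  · -- no prime factors: N = 1
    have : N.primeFactors = ∅ := Finset.card_eq_zero.mp (by omega)
    have := Nat.primeFactors_eq_empty.mp this
    omega
  rcases Nat.lt_or_ge N.primeFactors.card 2 with hone | htwo
  · -- exactly one prime factor
    have hcard1 : N.primeFactors.card = 1 := by omega
    obtain ⟨p, hPF⟩ := Finset.card_eq_one.mp hcard1
    have hpPF : p ∈ N.primeFactors := hPF ▸ Finset.mem_singleton_self p
    have hp : p.Prime := Nat.prime_of_mem_primeFactors hpPF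
    have hp2 : p ≠ 2 := odd_prime_of_dvd_odd hp (Nat.dvd_of_mem_primeFactors hpPF) hodd
    set a := N.factorization p with ha
    have ha1 : 1 ≤ a := hp.factorization_pos_of_dvd hN0 (Nat.dvd_of_mem_primeFactors hpPF)
    have hNeq : N = p ^ a := by
      conv_lhs => rw [← Nat.factorization_prod_pow_eq_self hN0]
      rw [Nat.prod_factorization_eq_prod_primeFactors, hPF, Finset.prod_singleton]
    have hus : usigma N = p ^ a + 1 := by
      rw [usigma_eq_prod N hN0, hPF, Finset.prod_singleton]
    have := one_prime_case p a c R hp hp2 ha1 hc1 (by rw [← hus, hMeq])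
      (by rw [hRel, hNeq])
    rw [hNeq] at h9
    exact h9 this
  · -- exactly two prime factors
    have hcard2 : N.primeFactors.card = 2 := by omega
    obtain ⟨p, q, hne, hPF⟩ := Finset.card_eq_two.mp hcard2
    have hpPF : p ∈ N.primeFactors := hPF ▸ Finset.mem_insert_self p {q}
    have hqPF : q ∈ N.primeFactors := hPF ▸ Finset.mem_insert_of_mem (Finset.mem_singleton_self q)
    have hp : p.Prime := Nat.prime_of_mem_primeFactors hpPF
    have hq : q.Prime := Nat.prime_of_mem_primeFactors hqPF
    have hp2 : p ≠ 2 := odd_prime_of_dvd_odd hp (Nat.dvd_of_mem_primeFactors hpPF) hodd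
    have hq2 : q ≠ 2 := odd_prime_of_dvd_odd hq (Nat.dvd_of_mem_primeFactors hqPF) hodd
    set a := N.factorization p with ha
    set b := N.factorization q with hb
    have ha1 : 1 ≤ a := hp.factorization_pos_of_dvd hN0 (Nat.dvd_of_mem_primeFactors hpPF)
    have hb1 : 1 ≤ b := hq.factorization_pos_of_dvd hN0 (Nat.dvd_of_mem_primeFactors hqPF)
    have hNeq : N = p ^ a * q ^ b := by
      conv_lhs => rw [← Nat.factorization_prod_pow_eq_self hN0]
      rw [Nat.prod_factorization_eq_prod_primeFactors, hPF, Finset.prod_pair hne]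
    have hus : usigma N = (p ^ a + 1) * (q ^ b + 1) := by
      rw [usigma_eq_prod N hN0, hPF, Finset.prod_pair hne]
    -- c ≥ 2
    have hc2 : 2 ≤ c := by
      have hpodd : Odd (p ^ a) := (hp.odd_of_ne_two hp2).pow
      have hqodd : Odd (q ^ b) := (hq.odd_of_ne_two hq2).pow
      have h4 : 4 ∣ (p ^ a + 1) * (q ^ b + 1) := by
        obtain ⟨k, hk⟩ := hpodd
        obtain ⟨l, hl⟩ := hqodd
        exact ⟨(k+1)*(l+1), by rw [hk, hl]; ring⟩
      rw [hus] at hMeq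
      rw [hMeq] at h4
      rcases Nat.lt_or_ge c 2 with hlt | hge
      · exfalso
        have hceq : c = 1 := by omega
        rw [hceq, pow_one] at h4
        rw [Nat.odd_iff] at hRodd
        omega
      · exact hge
    have h1'' : (p ^ a + 1) * (q ^ b + 1) = 2 ^ c * R := by rw [← hus, hMeq]
    have h2'' : (2 ^ c + 1) * (R + 1) = 2 * (p ^ a * q ^ b) := by rw [hRel, hNeq]
    rcases hne.lt_or_gt with hlt | hlt
    · exact two_prime_case p q a b c R hp hq hlt hp2 hq2 ha1 hb1 hc2 h1'' h2''
    · exact two_prime_case q p b a c R hq hp hlt hq2 hp2 hb1 ha1 hc2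
        (by rw [mul_comm (p^a+1)] at h1''; exact h1'') (by rw [mul_comm (p^a)] at h2''; exact h2'')
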